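/- arXiv:1904.06127 — 4 statements merged into one kernel-verified Lean document; each statement's English description precedes it below -/
import Mathlib

section
/- For the coupling η produced by the greedy algorithm with uniform target weights w̃_j = 1/n', the support of the j-th column of η is contained in the index interval [k_{j-1}, k_j], where k_u = min{ l : ∑_{i=1}^l w_i ≥ u/n' } for u = j−1, j (with k_0 = 1). Consequently the segmentation point x̃_j = ∑_{i=1}^n η_{i,j} n' x_i satisfies x_{k_{j-1}} ≤ x̃_j ≤ x_{k_j}. -/
open Finset

private lemma telescope_aux (g : ℕ → ℝ) (n : ℕ) :
    ∑ i ∈ Finset.Icc 1 n, (g i - g (i - 1)) = g n - g 0 := by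
  induction n with
  | zero => simp
  | succ m ih =>
      rw [Finset.sum_Icc_succ_top (Nat.one_le_iff_ne_zero.mpr (Nat.succ_ne_zero m)), ih]
      simp

/-- For the greedy coupling with uniform target weights `1/n'`, the support of the `j`-th
column is contained in `[k (j-1), k j]`, where `k u` is the least index whose cumulative
weight reaches `u / n'` (with `k 0 = 1`); consequently the segmentation point
`x̃ j = n' * ∑ i, η i j * x i` satisfies `x (k (j-1)) ≤ x̃ j ≤ x (k j)`. -/
theorem greedy_column_support_and_segpoint_bounds
    (n n' : ℕ) (hn : 1 ≤ n) (hn' : 1 ≤ n')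
    (x w : ℕ → ℝ)
    (hx : StrictMonoOn x (Set.Icc 1 n))
    (hw : ∀ i ∈ Finset.Icc 1 n, 0 ≤ w i)
    (hw1 : ∑ i ∈ Finset.Icc 1 n, w i = 1)
    (k : ℕ → ℕ) (hk0 : k 0 = 1)
    (hk : ∀ u ∈ Finset.Icc 1 n', k u ∈ Finset.Icc 1 n ∧
      (u : ℝ) / n' ≤ ∑ i ∈ Finset.Icc 1 (k u), w i ∧
      ∀ l < k u, ∑ i ∈ Finset.Icc 1 l, w i < (u : ℝ) / n')
    (η : ℕ → ℕ → ℝ)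
    (hη : ∀ i j, η i j =
      max 0 (min (∑ l ∈ Finset.Icc 1 i, w l) ((j : ℝ) / n')
        - max (∑ l ∈ Finset.Icc 1 (i - 1), w l) (((j : ℝ) - 1) / n')))
    (xt : ℕ → ℝ)
    (hxt : ∀ j, xt j = n' * ∑ i ∈ Finset.Icc 1 n, η i j * x i) :
    ∀ j ∈ Finset.Icc 1 n',
      (∀ i ∈ Finset.Icc 1 n, η i j ≠ 0 → k (j - 1) ≤ i ∧ i ≤ k j) ∧
      x (k (j - 1)) ≤ xt j ∧ xt j ≤ x (k j) := by
  intro j hj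
  rw [Finset.mem_Icc] at hj
  obtain ⟨hj1, hjn'⟩ := hj
  have hn'0 : (0:ℝ) < n' := by exact_mod_cast hn'
  set W : ℕ → ℝ := fun m => ∑ i ∈ Finset.Icc 1 m, w i with hWdef
  have hWmono : ∀ p q : ℕ, p ≤ q → q ≤ n → W p ≤ W q := by
    intro p q hpq hqn
    apply Finset.sum_le_sum_of_subset_of_nonneg (Finset.Icc_subset_Icc le_rfl hpq)
    intro i hi _
    rw [Finset.mem_Icc] at hi
    exact hw i (Finset.mem_Icc.mpr ⟨hi.1, hi.2.trans hqn⟩)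
  set a : ℝ := ((j:ℝ) - 1) / n' with hadef
  set b : ℝ := (j:ℝ) / n' with hbdef
  have hab : a ≤ b := by
    rw [hadef, hbdef, div_le_div_iff₀ hn'0 hn'0]
    nlinarith
  have hcast : ((j - 1 : ℕ) : ℝ) = (j:ℝ) - 1 := by
    push_cast [hj1]; ring
  have ha0 : 0 ≤ a := by
    apply div_nonneg _ hn'0.le
    have : (1:ℝ) ≤ (j:ℝ) := by exact_mod_cast hj1
    linarith
  have hb1 : b ≤ 1 := by
    rw [hbdef, div_le_one hn'0]
    exact_mod_cast hjn'
  have ha1 : a ≤ 1 := hab.trans hb1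
  have hηform : ∀ i, η i j = max 0 (min (W i) b - max (W (i - 1)) a) := by
    intro i; rw [hη]
  have hηnn : ∀ i, 0 ≤ η i j := fun i => by rw [hηform]; exact le_max_left _ _
  -- support claim
  have hsupp : ∀ i ∈ Finset.Icc 1 n, η i j ≠ 0 → k (j - 1) ≤ i ∧ i ≤ k j := by
    intro i hi hne
    rw [Finset.mem_Icc] at hi
    have hpos : 0 < min (W i) b - max (W (i - 1)) a := by
      by_contra h
      push_neg at h
      exact hne (by rw [hηform]; exact max_eq_left h)
    have hmm : max (W (i - 1)) a < min (W i) b := by linarith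
    have hWia : a < W i :=
      lt_of_lt_of_le (lt_of_le_of_lt (le_max_right _ _) hmm) (min_le_left _ _)
    have hWib : W (i - 1) < b :=
      lt_of_le_of_lt (le_max_left _ _) (lt_of_lt_of_le hmm (min_le_right _ _))
    constructor
    · rcases Nat.eq_or_lt_of_le hj1 with h1 | h2
      · rw [← h1]; simpa [hk0] using hi.1
      · have hu : j - 1 ∈ Finset.Icc 1 n' :=
          Finset.mem_Icc.mpr ⟨Nat.le_sub_one_of_lt h2, (Nat.sub_le j 1).trans hjn'⟩
        by_contra h
        push_neg at h
        have := (hk (j - 1) hu).2.2 i h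
        rw [hcast] at this
        exact absurd hWia (by simpa [hadef] using this.not_gt)
    · by_contra h
      push_neg at h
      have hkj := hk j (Finset.mem_Icc.mpr ⟨hj1, hjn'⟩)
      have h1 : k j ≤ i - 1 := Nat.le_sub_one_of_lt h
      have h2 : W (k j) ≤ W (i - 1) := hWmono _ _ h1 ((Nat.sub_le i 1).trans hi.2)
      have h3 : b ≤ W (k j) := hkj.2.1
      linarith
  -- clamp identity and column sum
  set g : ℕ → ℝ := fun m => min (max (W m) a) b with hgdef
  have hkey : ∀ i ∈ Finset.Icc 1 n, η i j = g i - g (i - 1) := by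
    intro i hi
    rw [Finset.mem_Icc] at hi
    have hW' : W (i - 1) ≤ W i := hWmono _ _ (Nat.sub_le i 1) hi.2
    rw [hηform]
    simp only [hgdef, max_def, min_def]
    split_ifs <;> linarith
  have hsum : ∑ i ∈ Finset.Icc 1 n, η i j = 1 / n' := by
    rw [Finset.sum_congr rfl hkey, telescope_aux g n]
    have hWn : W n = 1 := hw1
    have hW0 : W 0 = 0 := by simp [hWdef]
    rw [hgdef]
    simp only [hWn, hW0]
    rw [max_eq_left ha1, min_eq_right hb1, max_eq_right ha0, min_eq_left hab,
      hadef, hbdef]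
    ring
  -- membership of the endpoints
  have hkjmem : k j ∈ Finset.Icc 1 n := (hk j (Finset.mem_Icc.mpr ⟨hj1, hjn'⟩)).1
  have hkj1mem : k (j - 1) ∈ Finset.Icc 1 n := by
    rcases Nat.eq_or_lt_of_le hj1 with h1 | h2
    · rw [← h1]; simp [hk0, Finset.mem_Icc, hn]
    · exact (hk (j - 1) (Finset.mem_Icc.mpr
        ⟨Nat.le_sub_one_of_lt h2, (Nat.sub_le j 1).trans hjn'⟩)).1
  have hmemS : ∀ m : ℕ, m ∈ Finset.Icc 1 n → m ∈ Set.Icc 1 n := by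
    intro m hm; rw [Finset.mem_Icc] at hm; exact Set.mem_Icc.mpr hm
  refine ⟨hsupp, ?_, ?_⟩
  · -- lower bound
    have hterm : ∀ i ∈ Finset.Icc 1 n, η i j * x (k (j - 1)) ≤ η i j * x i := by
      intro i hi
      by_cases h : η i j = 0
      · simp [h]
      · apply mul_le_mul_of_nonneg_left _ (hηnn i)
        exact hx.monotoneOn (hmemS _ hkj1mem) (hmemS _ hi) (hsupp i hi h).1
    calc x (k (j - 1)) = (n':ℝ) * ((∑ i ∈ Finset.Icc 1 n, η i j) * x (k (j - 1))) := by
          rw [hsum]; field_simp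
      _ = (n':ℝ) * ∑ i ∈ Finset.Icc 1 n, η i j * x (k (j - 1)) := by
          rw [Finset.sum_mul]
      _ ≤ (n':ℝ) * ∑ i ∈ Finset.Icc 1 n, η i j * x i := by
          apply mul_le_mul_of_nonneg_left (Finset.sum_le_sum hterm) hn'0.le
      _ = xt j := (hxt j).symm
  · -- upper bound
    have hterm : ∀ i ∈ Finset.Icc 1 n, η i j * x i ≤ η i j * x (k j) := by
      intro i hi
      by_cases h : η i j = 0
      · simp [h]
      · apply mul_le_mul_of_nonneg_left _ (hηnn i)
        exact hx.monotoneOn (hmemS _ hi) (hmemS _ hkjmem) (hsupp i hi h).2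
    calc xt j = (n':ℝ) * ∑ i ∈ Finset.Icc 1 n, η i j * x i := hxt j
      _ ≤ (n':ℝ) * ∑ i ∈ Finset.Icc 1 n, η i j * x (k j) := by
          apply mul_le_mul_of_nonneg_left (Finset.sum_le_sum hterm) hn'0.le
      _ = (n':ℝ) * ((∑ i ∈ Finset.Icc 1 n, η i j) * x (k j)) := by
          rw [Finset.sum_mul]
      _ = x (k j) := by rw [hsum]; field_simp
end

section
/- The segmentation points x̃_1, ..., x̃_{n'} defined by x̃_j = n' ∑_{i=1}^n η_{i,j} x_i, where η is the greedy coupling to uniform target weights, form a nondecreasing sequence: x̃_1 ≤ x̃_2 ≤ ... ≤ x̃_{n'}. -/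
open Finset

lemma clamp_diff (a b u v : ℝ) (hab : a ≤ b) (huv : u ≤ v) :
    max 0 (min v b - max u a) = max a (min v b) - max a (min u b) := by
  simp only [max_def, min_def]
  split_ifs <;> linarith

/-- The segmentation points `x̃ j = n' * ∑ i, η i j * x i`, where `η` is the greedy coupling
to uniform target weights, form a nondecreasing sequence. -/
theorem segmentation_points_monotone
    (n n' : ℕ) (hn : 1 ≤ n) (hn' : 1 ≤ n')
    (x w : ℕ → ℝ)
    (hx : StrictMonoOn x (Set.Icc 1 n))
    (hw : ∀ i ∈ Finset.Icc 1 n, 0 ≤ w i)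
    (hw1 : ∑ i ∈ Finset.Icc 1 n, w i = 1)
    (η : ℕ → ℕ → ℝ)
    (hη : ∀ i j, η i j =
      max 0 (min (∑ l ∈ Finset.Icc 1 i, w l) ((j : ℝ) / n')
        - max (∑ l ∈ Finset.Icc 1 (i - 1), w l) (((j : ℝ) - 1) / n')))
    (xt : ℕ → ℝ)
    (hxt : ∀ j, xt j = n' * ∑ i ∈ Finset.Icc 1 n, η i j * x i) :
    ∀ j ∈ Finset.Icc 1 n', ∀ j' ∈ Finset.Icc 1 n', j ≤ j' → xt j ≤ xt j' := by
  have hn'pos : (0:ℝ) < n' := by exact_mod_cast hn'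
  set W : ℕ → ℝ := fun i => ∑ l ∈ Finset.Icc 1 i, w l with hWdef
  have hW0 : W 0 = 0 := by simp [hWdef]
  have hWn : W n = 1 := hw1
  have hWmono : ∀ a b : ℕ, a ≤ b → b ≤ n → W a ≤ W b := by
    intro a b hab hbn
    apply Finset.sum_le_sum_of_subset_of_nonneg (Finset.Icc_subset_Icc_right hab)
    intro i hi _
    exact hw i (Finset.mem_Icc.mpr ⟨(Finset.mem_Icc.mp hi).1,
      le_trans (Finset.mem_Icc.mp hi).2 hbn⟩)
  have hηnn : ∀ i j, 0 ≤ η i j := by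
    intro i j; rw [hη]; exact le_max_left _ _
  -- column sums
  have hsum : ∀ j : ℕ, 1 ≤ j → j ≤ n' →
      ∑ i ∈ Finset.Icc 1 n, η i j = 1 / n' := by
    intro j hj1 hjn'
    have hab : ((j:ℝ)-1)/n' ≤ (j:ℝ)/n' := by
      apply (div_le_div_iff_of_pos_right hn'pos).mpr; linarith
    set G : ℕ → ℝ := fun i => max (((j:ℝ)-1)/n') (min (W i) ((j:ℝ)/n')) with hGdef
    have hterm : ∀ i ∈ Finset.Icc 1 n, η i j = G i - G (i-1) := by
      intro i hi
      rw [hη]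
      exact clamp_diff _ _ _ _ hab (hWmono (i-1) i (Nat.sub_le i 1) (Finset.mem_Icc.mp hi).2)
    rw [Finset.sum_congr rfl hterm]
    have hIcc : Finset.Icc 1 n = Finset.Ico 1 (n+1) := by
      rw [Nat.Icc_eq_range', Nat.Ico_eq_range']
    rw [hIcc, Finset.sum_Ico_eq_sum_range]
    have hsimp : ∀ i ∈ Finset.range (n + 1 - 1), G (1 + i) - G (1 + i - 1) = G (i+1) - G i := by
      intro i _
      congr 2 <;> omega
    rw [Finset.sum_congr rfl hsimp, Finset.sum_range_sub]
    have h1 : n + 1 - 1 = n := by omega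
    rw [h1]
    simp only [hGdef]
    rw [hW0, hWn]
    have hb1 : (j:ℝ)/n' ≤ 1 := by
      rw [div_le_one hn'pos]; exact_mod_cast hjn'
    have ha0 : 0 ≤ ((j:ℝ)-1)/n' := by
      apply div_nonneg ?_ hn'pos.le
      have : (1:ℝ) ≤ j := by exact_mod_cast hj1
      linarith
    have hb0 : 0 ≤ (j:ℝ)/n' := le_trans ha0 hab
    rw [min_eq_right hb1, max_eq_right hab, min_eq_left hb0, max_eq_left ha0]
    field_simp
    ring
  -- adjacent step
  have key : ∀ k : ℕ, 1 ≤ k → k + 1 ≤ n' → xt k ≤ xt (k+1) := by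
    intro k hk1 hk2
    have hkn' : (k:ℝ)/n' ≤ 1 := by
      rw [div_le_one hn'pos]
      exact_mod_cast le_trans (Nat.le_succ k) hk2
    have hex : ∃ i, (k:ℝ)/n' ≤ W i := ⟨n, by rw [hWn]; exact hkn'⟩
    set m := Nat.find hex with hm
    have hmW : (k:ℝ)/n' ≤ W m := Nat.find_spec hex
    have hmmin : ∀ i, i < m → W i < (k:ℝ)/n' := fun i hi =>
      lt_of_not_ge (Nat.find_min hex hi)
    have hmn : m ≤ n := Nat.find_le (by rw [hWn]; exact hkn')
    have hm1 : 1 ≤ m := by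
      rcases Nat.eq_zero_or_pos m with h0 | h; swap
      · exact h
      exfalso
      rw [h0, hW0] at hmW
      have : (0:ℝ) < (k:ℝ)/n' := by
        apply div_pos ?_ hn'pos
        exact_mod_cast hk1
      linarith
    have hmem : m ∈ Set.Icc 1 n := ⟨hm1, hmn⟩
    -- xt k ≤ x m
    have h1 : xt k ≤ x m := by
      rw [hxt]
      have hle : ∑ i ∈ Finset.Icc 1 n, η i k * x i ≤ ∑ i ∈ Finset.Icc 1 n, η i k * x m := by
        apply Finset.sum_le_sum
        intro i hi
        rcases eq_or_lt_of_le (hηnn i k) with h0 | hpos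
        · rw [← h0]; simp
        · have him : i ≤ m := by
            have hpos' := hpos
            rw [hη] at hpos'
            have ht : 0 < min (W i) ((k:ℝ)/n')
                - max (W (i-1)) (((k:ℝ)-1)/n') := by
              rcases lt_max_iff.mp hpos' with h | h
              · exact absurd h (lt_irrefl 0)
              · exact h
            have hWi1 : W (i-1) < (k:ℝ)/n' := by
              have h1' : W (i-1) ≤ max (W (i-1)) (((k:ℝ)-1)/n') := le_max_left _ _
              have h2' : min (W i) ((k:ℝ)/n') ≤ (k:ℝ)/n' := min_le_right _ _
              linarith
            by_contra hc
            push_neg at hc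
            have : (k:ℝ)/n' ≤ W (i-1) :=
              le_trans hmW (hWmono m (i-1) (by omega)
                (le_trans (Nat.sub_le i 1) (Finset.mem_Icc.mp hi).2))
            linarith
          have hximem : i ∈ Set.Icc 1 n :=
            ⟨(Finset.mem_Icc.mp hi).1, (Finset.mem_Icc.mp hi).2⟩
          exact mul_le_mul_of_nonneg_left (hx.monotoneOn hximem hmem him) (hηnn i k)
      calc (n':ℝ) * ∑ i ∈ Finset.Icc 1 n, η i k * x i
          ≤ (n':ℝ) * ∑ i ∈ Finset.Icc 1 n, η i k * x m :=
            mul_le_mul_of_nonneg_left hle hn'pos.le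
        _ = x m := by
            rw [← Finset.sum_mul, hsum k hk1 (by omega)]
            field_simp
    -- x m ≤ xt (k+1)
    have h2 : x m ≤ xt (k+1) := by
      rw [hxt]
      have hle : ∑ i ∈ Finset.Icc 1 n, η i (k+1) * x m
          ≤ ∑ i ∈ Finset.Icc 1 n, η i (k+1) * x i := by
        apply Finset.sum_le_sum
        intro i hi
        rcases eq_or_lt_of_le (hηnn i (k+1)) with h0 | hpos
        · rw [← h0]; simp
        · have hmi : m ≤ i := by
            have hpos' := hpos
            rw [hη] at hpos'
            have ht : 0 < min (W i) (((k:ℝ)+1)/n')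
                - max (W (i-1)) ((((k:ℝ)+1)-1)/n') := by
              rcases lt_max_iff.mp hpos' with h | h
              · exact absurd h (lt_irrefl 0)
              · convert h using 3 <;> push_cast <;> rfl
            have hWi : (k:ℝ)/n' < W i := by
              have h1' : ((((k:ℝ)+1)-1)/n') ≤ max (W (i-1)) ((((k:ℝ)+1)-1)/n') :=
                le_max_right _ _
              have h2' : min (W i) (((k:ℝ)+1)/n') ≤ W i := min_le_left _ _
              have : (((k:ℝ)+1)-1)/n' = (k:ℝ)/n' := by ring_nf
              linarith [this ▸ h1']
            by_contra hc
            push_neg at hc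
            exact absurd hWi (not_lt.mpr (le_of_lt (hmmin i hc)))
          have hximem : i ∈ Set.Icc 1 n :=
            ⟨(Finset.mem_Icc.mp hi).1, (Finset.mem_Icc.mp hi).2⟩
          exact mul_le_mul_of_nonneg_left (hx.monotoneOn hmem hximem hmi) (hηnn i (k+1))
      calc x m = (n':ℝ) * ∑ i ∈ Finset.Icc 1 n, η i (k+1) * x m := by
            rw [← Finset.sum_mul, hsum (k+1) (by omega) hk2]
            field_simp
        _ ≤ (n':ℝ) * ∑ i ∈ Finset.Icc 1 n, η i (k+1) * x i :=
            mul_le_mul_of_nonneg_left hle hn'pos.le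
    exact le_trans h1 h2
  -- chain
  intro j hj j' hj' hjj'
  obtain ⟨hj1, hjn'⟩ := Finset.mem_Icc.mp hj
  obtain ⟨hj'1, hj'n'⟩ := Finset.mem_Icc.mp hj'
  have main : ∀ q : ℕ, j ≤ q → q ≤ n' → xt j ≤ xt q := by
    intro q
    induction q with
    | zero => intro h1 _; exact absurd h1 (by omega)
    | succ p ih =>
      intro h1 h2
      rcases Nat.eq_or_lt_of_le h1 with heq | hlt
      · rw [heq]
      · have hjp : j ≤ p := by omega
        exact le_trans (ih hjp (by omega)) (key p (le_trans hj1 hjp) h2)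
  exact main j' hjj' hj'n'
end

section
/- Streaming synopsis partial-sum error bound: if the pruned synopsis indices i_l, i_u are chosen so that each merged block of relevance scores has total mass at most ε Z (where Z = ∑_{l=1}^n φ_l), then the partial sums of the synopsis relevance scores up to i_l and i_u approximate the true partial sums up to k_{j−1} and k_j within ε Z: |∑_{l=1}^{i_l} φ^S_l − ∑_{l=1}^{k_{j−1}} φ_l| ≤ ε Z and |∑_{l=1}^{i_u} φ^S_l − ∑_{l=1}^{k_j} φ_l| ≤ ε Z. -/
open Finset

private theorem synopsis_key
    (n L : ℕ) (ε Z : ℝ) (hε : 0 ≤ ε)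
    (φ φS : ℕ → ℝ) (r : ℕ → ℕ)
    (hφ : ∀ l ∈ Finset.Icc 1 n, 0 ≤ φ l)
    (hZ : Z = ∑ l ∈ Finset.Icc 1 n, φ l)
    (hr0 : r 0 = 0) (hrL : r L = n)
    (hrmono : StrictMonoOn r (Set.Icc 0 L))
    (hφS : ∀ m, φS m = ∑ l ∈ Finset.Icc (r (m - 1) + 1) (r m), φ l)
    (hinv : ∀ m ∈ Finset.Icc 1 L, 1 < r m - r (m - 1) → φS m ≤ ε * Z)
    (τ : ℝ) (hτZ : τ ≤ Z) (k m : ℕ)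
    (hk1 : τ ≤ ∑ l ∈ Finset.Icc 1 k, φ l)
    (hk2 : ∀ k' < k, ∑ l ∈ Finset.Icc 1 k', φ l < τ)
    (hm1 : τ ≤ ∑ m' ∈ Finset.Icc 1 m, φS m')
    (hm2 : ∀ m'' < m, ∑ m' ∈ Finset.Icc 1 m'', φS m' < τ) :
    |(∑ m' ∈ Finset.Icc 1 m, φS m') - ∑ l ∈ Finset.Icc 1 k, φ l| ≤ ε * Z := by
  have hZ0 : 0 ≤ Z := hZ ▸ Finset.sum_nonneg hφ
  have hεZ : 0 ≤ ε * Z := mul_nonneg hε hZ0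
  have hIoc : ∀ a : ℕ, Finset.Icc 1 a = Finset.Ioc 0 a := by
    intro a; rw [← Finset.Icc_add_one_left_eq_Ioc]; rfl
  have rmono : ∀ a b, a ≤ b → b ≤ L → r a ≤ r b := by
    intro a b hab hbL
    exact hrmono.monotoneOn ⟨Nat.zero_le a, hab.trans hbL⟩ ⟨Nat.zero_le b, hbL⟩ hab
  have Tmono : ∀ a b : ℕ, a ≤ b → b ≤ n →
      ∑ l ∈ Finset.Icc 1 a, φ l ≤ ∑ l ∈ Finset.Icc 1 b, φ l := by
    intro a b hab hbn
    apply Finset.sum_le_sum_of_subset_of_nonneg (Finset.Icc_subset_Icc_right hab)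
    intro i hi _
    exact hφ i (Finset.Icc_subset_Icc_right hbn hi)
  -- synopsis partial sums telescope
  have hST : ∀ p, p ≤ L → ∑ m' ∈ Finset.Icc 1 p, φS m' = ∑ l ∈ Finset.Icc 1 (r p), φ l := by
    intro p hp
    induction p with
    | zero => simp [hr0]
    | succ q ih =>
      have hqL : q ≤ L := Nat.le_of_succ_le hp
      have hrq : r q ≤ r (q + 1) := rmono q (q + 1) (Nat.le_succ q) hp
      rw [Finset.sum_Icc_succ_top (Nat.one_le_iff_ne_zero.mpr (Nat.succ_ne_zero q)),
        ih hqL, hφS]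
      simp only [Nat.add_sub_cancel]
      rw [hIoc, hIoc (r (q + 1)), Finset.Icc_add_one_left_eq_Ioc]
      exact Finset.sum_Ioc_consecutive φ (Nat.zero_le _) hrq
  -- k ≤ n
  have hkn : k ≤ n := by
    by_contra h
    have := hk2 n (Nat.lt_of_not_le h)
    rw [← hZ] at this
    exact absurd hτZ (not_le.mpr this)
  -- m ≤ L
  have hmL : m ≤ L := by
    by_contra h
    have := hm2 L (Nat.lt_of_not_le h)
    rw [hST L le_rfl, hrL, ← hZ] at this
    exact absurd hτZ (not_le.mpr this)
  rcases Nat.eq_zero_or_pos m with hm0 | hm0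
  · -- m = 0 : τ ≤ 0, hence k = 0
    subst hm0
    simp only [show Finset.Icc 1 0 = (∅ : Finset ℕ) by rfl, Finset.sum_empty] at hm1 ⊢
    have hk0 : k = 0 := by
      by_contra h
      have := hk2 0 (Nat.pos_of_ne_zero h)
      simp only [show Finset.Icc 1 0 = (∅ : Finset ℕ) by rfl, Finset.sum_empty] at this
      exact absurd hm1 (not_le.mpr this)
    subst hk0
    simp only [show Finset.Icc 1 0 = (∅ : Finset ℕ) by rfl, Finset.sum_empty]
    simpa using hεZ
  · -- m ≥ 1
    set a := r m with ha
    set b := r (m - 1) with hb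
    have hba : b < a := by
      apply hrmono ⟨Nat.zero_le _, (Nat.sub_le m 1).trans hmL⟩ ⟨Nat.zero_le _, hmL⟩
      exact Nat.sub_lt hm0 one_pos
    have han : a ≤ n := hrL ▸ rmono m L hmL le_rfl
    have hbn : b ≤ n := le_of_lt (lt_of_lt_of_le hba han)
    have hSm : ∑ m' ∈ Finset.Icc 1 m, φS m' = ∑ l ∈ Finset.Icc 1 a, φ l := hST m hmL
    have hSm1 : ∑ m' ∈ Finset.Icc 1 (m - 1), φS m' = ∑ l ∈ Finset.Icc 1 b, φ l :=
      hST (m - 1) ((Nat.sub_le m 1).trans hmL)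
    have hTb : ∑ l ∈ Finset.Icc 1 b, φ l < τ := by
      rw [← hSm1]; exact hm2 (m - 1) (Nat.sub_lt hm0 one_pos)
    -- k ≤ a
    have hka : k ≤ a := by
      by_contra h
      have := hk2 a (Nat.lt_of_not_le h)
      rw [← hSm] at this
      exact absurd hm1 (not_le.mpr this)
    -- b < k
    have hbk : b < k := by
      by_contra h
      have := Tmono k b (Nat.le_of_not_lt h) hbn
      exact absurd hk1 (not_le.mpr (lt_of_le_of_lt this hTb))
    -- difference is the tail of block m
    have hdiff : (∑ m' ∈ Finset.Icc 1 m, φS m') - ∑ l ∈ Finset.Icc 1 k, φ l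
        = ∑ l ∈ Finset.Ioc k a, φ l := by
      rw [hSm, hIoc, hIoc]
      rw [← Finset.sum_Ioc_consecutive φ (Nat.zero_le k) hka]
      ring
    have hnonneg : 0 ≤ ∑ l ∈ Finset.Ioc k a, φ l := by
      apply Finset.sum_nonneg
      intro i hi
      rw [Finset.mem_Ioc] at hi
      exact hφ i (Finset.mem_Icc.mpr ⟨by omega, hi.2.trans han⟩)
    have hupper : ∑ l ∈ Finset.Ioc k a, φ l ≤ ε * Z := by
      rcases eq_or_lt_of_le hka with hk_eq | hk_lt
      · subst hk_eq; simp [hεZ]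
      · -- block has size ≥ 2
        have hsize : 1 < a - b := by omega
        have hblock : φS m ≤ ε * Z := by
          apply hinv m (Finset.mem_Icc.mpr ⟨hm0, hmL⟩)
          exact hsize
        refine le_trans ?_ hblock
        rw [hφS m, Finset.Icc_add_one_left_eq_Ioc]
        apply Finset.sum_le_sum_of_subset_of_nonneg
        · apply Finset.Ioc_subset_Ioc_left (le_of_lt hbk)
        · intro i hi _
          rw [Finset.mem_Ioc] at hi
          exact hφ i (Finset.mem_Icc.mpr ⟨by omega, hi.2.trans han⟩)
    rw [hdiff, abs_of_nonneg hnonneg]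
    exact hupper

/-- Streaming synopsis partial-sum error bound: if every merged block (of size `> 1`) of the
synopsis has total relevance mass at most `ε * Z`, then the synopsis partial sums up to the
block indices `m₁`, `m₂` chosen for the thresholds `(j-1) * Z / n'` and `j * Z / n'`
approximate the true partial sums up to `k₁ = k_{j-1}` and `k₂ = k_j` within `ε * Z`. -/
theorem synopsis_partial_sum_error
    (n L n' j : ℕ) (hn' : 1 ≤ n') (hj : 1 ≤ j) (hjn' : j ≤ n')
    (ε Z : ℝ) (hε : 0 ≤ ε)
    (φ φS : ℕ → ℝ) (r : ℕ → ℕ)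
    (hφ : ∀ l ∈ Finset.Icc 1 n, 0 ≤ φ l)
    (hZ : Z = ∑ l ∈ Finset.Icc 1 n, φ l)
    (hr0 : r 0 = 0) (hrL : r L = n)
    (hrmono : StrictMonoOn r (Set.Icc 0 L))
    (hφS : ∀ m, φS m = ∑ l ∈ Finset.Icc (r (m - 1) + 1) (r m), φ l)
    (hinv : ∀ m ∈ Finset.Icc 1 L, 1 < r m - r (m - 1) → φS m ≤ ε * Z)
    (k₁ k₂ m₁ m₂ : ℕ)
    (hk₁ : ((j : ℝ) - 1) * Z / n' ≤ ∑ l ∈ Finset.Icc 1 k₁, φ l ∧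
      ∀ k' < k₁, ∑ l ∈ Finset.Icc 1 k', φ l < ((j : ℝ) - 1) * Z / n')
    (hk₂ : (j : ℝ) * Z / n' ≤ ∑ l ∈ Finset.Icc 1 k₂, φ l ∧
      ∀ k' < k₂, ∑ l ∈ Finset.Icc 1 k', φ l < (j : ℝ) * Z / n')
    (hm₁ : ((j : ℝ) - 1) * Z / n' ≤ ∑ m' ∈ Finset.Icc 1 m₁, φS m' ∧
      ∀ m'' < m₁, ∑ m' ∈ Finset.Icc 1 m'', φS m' < ((j : ℝ) - 1) * Z / n')
    (hm₂ : (j : ℝ) * Z / n' ≤ ∑ m' ∈ Finset.Icc 1 m₂, φS m' ∧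
      ∀ m'' < m₂, ∑ m' ∈ Finset.Icc 1 m'', φS m' < (j : ℝ) * Z / n') :
    |(∑ m' ∈ Finset.Icc 1 m₁, φS m') - ∑ l ∈ Finset.Icc 1 k₁, φ l| ≤ ε * Z ∧
    |(∑ m' ∈ Finset.Icc 1 m₂, φS m') - ∑ l ∈ Finset.Icc 1 k₂, φ l| ≤ ε * Z := by
  have hZ0 : 0 ≤ Z := hZ ▸ Finset.sum_nonneg hφ
  have hn'0 : (0:ℝ) < n' := by exact_mod_cast hn'
  have hτ₁ : ((j : ℝ) - 1) * Z / n' ≤ Z := by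
    rw [div_le_iff₀ hn'0]
    have h1 : (j : ℝ) - 1 ≤ n' := by
      have : (j : ℝ) ≤ n' := by exact_mod_cast hjn'
      linarith
    calc ((j : ℝ) - 1) * Z ≤ (n' : ℝ) * Z := by
          apply mul_le_mul_of_nonneg_right h1 hZ0
      _ = Z * n' := by ring
  have hτ₂ : (j : ℝ) * Z / n' ≤ Z := by
    rw [div_le_iff₀ hn'0]
    have h1 : (j : ℝ) ≤ n' := by exact_mod_cast hjn'
    calc (j : ℝ) * Z ≤ (n' : ℝ) * Z := mul_le_mul_of_nonneg_right h1 hZ0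
      _ = Z * n' := by ring
  exact ⟨synopsis_key n L ε Z hε φ φS r hφ hZ hr0 hrL hrmono hφS hinv _ hτ₁ k₁ m₁
      hk₁.1 hk₁.2 hm₁.1 hm₁.2,
    synopsis_key n L ε Z hε φ φS r hφ hZ hr0 hrL hrmono hφS hinv _ hτ₂ k₂ m₂
      hk₂.1 hk₂.2 hm₂.1 hm₂.2⟩
end

section
/- If the relevance mass is concentrated: suppose indices in a set E ⊆ {1,...,n} carry total weight ∑_{i∈E} w_i ≥ 1 − δ for the normalized relevance weights w, and E is an interval of indices. Then the number of columns j of the greedy uniform coupling whose support interval [k_{j-1}, k_j] is disjoint from E is at most δ n' + 2; i.e., at least n' − δn' − 2 of the n' segmentation points lie in the interval [x_{min E}, x_{max E}]. -/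
open Finset

lemma card_le_of_le_real (n' : ℕ) (T : Finset ℕ) (c : ℝ) (hc : 0 ≤ c)
    (hT : T ⊆ Finset.Icc 1 n') (h : ∀ j ∈ T, (j : ℝ) ≤ c) : (T.card : ℝ) ≤ c := by
  have hsub : T ⊆ Finset.Icc 1 ⌊c⌋₊ := by
    intro j hj
    exact Finset.mem_Icc.mpr ⟨(Finset.mem_Icc.mp (hT hj)).1, Nat.le_floor (h j hj)⟩
  have h1 := Finset.card_le_card hsub
  rw [Nat.card_Icc] at h1
  calc (T.card : ℝ) ≤ ((⌊c⌋₊ + 1 - 1 : ℕ) : ℝ) := by exact_mod_cast h1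
    _ = (⌊c⌋₊ : ℝ) := by simp
    _ ≤ c := Nat.floor_le hc

lemma card_le_of_gt_real (n' : ℕ) (T : Finset ℕ) (c : ℝ) (hc0 : 0 ≤ c) (hcn : c ≤ (n' : ℝ))
    (hT : T ⊆ Finset.Icc 1 n') (h : ∀ j ∈ T, c < (j : ℝ)) :
    (T.card : ℝ) ≤ (n' : ℝ) - c + 1 := by
  have hsub : T ⊆ Finset.Icc (⌊c⌋₊ + 1) n' := by
    intro j hj
    exact Finset.mem_Icc.mpr ⟨(Nat.floor_lt hc0).mpr (h j hj), (Finset.mem_Icc.mp (hT hj)).2⟩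
  have hfl : ⌊c⌋₊ ≤ n' := by
    have := Nat.floor_le_floor hcn
    simpa using this
  have h1 := Finset.card_le_card hsub
  rw [Nat.card_Icc] at h1
  have h2 : T.card ≤ n' - ⌊c⌋₊ := by omega
  have h3 : (T.card : ℝ) ≤ (n' : ℝ) - ⌊c⌋₊ := by
    rw [← Nat.cast_sub hfl]; exact_mod_cast h2
  have h4 : c - 1 ≤ (⌊c⌋₊ : ℝ) := by
    have := Nat.lt_floor_add_one c; linarith
  linarith

/-- If the relevance mass is concentrated on a contiguous block `E = [a, b]` of indices,
carrying weight at least `1 − δ`, then at most `δ n' + 2` of the columns of the greedy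
uniform coupling have support interval `[k (j-1), k j]` disjoint from `E`; consequently
at least `n' − δ n' − 2` of the `n'` segmentation points lie in `[x a, x b]`. -/
theorem concentration_of_segmentation_points
    (n n' : ℕ) (hn : 1 ≤ n) (hn' : 1 ≤ n')
    (x w : ℕ → ℝ) (δ : ℝ) (hδ0 : 0 ≤ δ) (hδ1 : δ ≤ 1)
    (hx : MonotoneOn x (Set.Icc 1 n))
    (hw : ∀ i ∈ Finset.Icc 1 n, 0 ≤ w i)
    (hw1 : ∑ i ∈ Finset.Icc 1 n, w i = 1)
    (k : ℕ → ℕ) (hk0 : k 0 = 1)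
    (hk : ∀ u ∈ Finset.Icc 1 n', k u ∈ Finset.Icc 1 n ∧
      (u : ℝ) / n' ≤ ∑ i ∈ Finset.Icc 1 (k u), w i ∧
      ∀ l < k u, ∑ i ∈ Finset.Icc 1 l, w i < (u : ℝ) / n')
    (a b : ℕ) (hab : a ≤ b) (hE : Finset.Icc a b ⊆ Finset.Icc 1 n)
    (hmass : 1 - δ ≤ ∑ i ∈ Finset.Icc a b, w i)
    (xt : ℕ → ℝ)
    (hxt : ∀ j ∈ Finset.Icc 1 n', x (k (j - 1)) ≤ xt j ∧ xt j ≤ x (k j)) :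
    (((Finset.Icc 1 n').filter
        (fun j => Disjoint (Finset.Icc (k (j - 1)) (k j)) (Finset.Icc a b))).card : ℝ)
      ≤ δ * n' + 2 ∧
    (n' : ℝ) - δ * n' - 2 ≤
      (((Finset.Icc 1 n').filter (fun j => x a ≤ xt j ∧ xt j ≤ x b)).card : ℝ) := by
  have hn'0 : (0 : ℝ) < n' := by exact_mod_cast hn'
  have haE : a ∈ Finset.Icc 1 n := hE (Finset.mem_Icc.mpr ⟨le_refl a, hab⟩)
  have hbE : b ∈ Finset.Icc 1 n := hE (Finset.mem_Icc.mpr ⟨hab, le_refl b⟩)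
  obtain ⟨ha1, han⟩ := Finset.mem_Icc.mp haE
  obtain ⟨hb1, hbn⟩ := Finset.mem_Icc.mp hbE
  -- partial sums
  set S : ℕ → ℝ := fun l => ∑ i ∈ Finset.Icc 1 l, w i with hSdef
  have Smono : ∀ l m : ℕ, l ≤ m → m ≤ n → S l ≤ S m := by
    intro l m hlm hmn
    apply Finset.sum_le_sum_of_subset_of_nonneg (Finset.Icc_subset_Icc_right hlm)
    intro i hi _
    obtain ⟨h1, h2⟩ := Finset.mem_Icc.mp hi
    exact hw i (Finset.mem_Icc.mpr ⟨h1, le_trans h2 hmn⟩)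
  have hα0 : 0 ≤ S (a - 1) := by
    apply Finset.sum_nonneg
    intro i hi
    obtain ⟨h1, h2⟩ := Finset.mem_Icc.mp hi
    exact hw i (Finset.mem_Icc.mpr ⟨h1, by omega⟩)
  set α : ℝ := S (a - 1) with hαdef
  set β : ℝ := S b with hβdef
  have hsplit : α + (∑ i ∈ Finset.Icc a b, w i) = β := by
    have e1 : Finset.Icc 1 (a - 1) = Finset.Ioc 0 (a - 1) := Finset.Icc_add_one_left_eq_Ioc 0 (a - 1)
    have e2 : Finset.Icc a b = Finset.Ioc (a - 1) b := by
      rw [← Finset.Icc_add_one_left_eq_Ioc]; congr 1; omega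
    have e3 : Finset.Icc 1 b = Finset.Ioc 0 b := Finset.Icc_add_one_left_eq_Ioc 0 b
    rw [hαdef, hβdef, hSdef]
    simp only [e1, e2, e3]
    exact Finset.sum_Ioc_consecutive w (by omega) (by omega)
  have hβlb : 1 - δ + α ≤ β := by linarith
  have hβ1 : β ≤ 1 := by
    have h := Smono b n hbn (le_refl n)
    have h2 : S b ≤ S n := h
    have h3 : S n = 1 := hw1
    rw [hβdef]; linarith
  have hβ0 : 0 ≤ β := by linarith
  have hαδ : α ≤ δ := by linarith
  -- monotonicity of k on columns
  have hkm : ∀ j ∈ Finset.Icc 1 n', k (j - 1) ≤ k j := by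
    intro j hj
    obtain ⟨hj1, hjn'⟩ := Finset.mem_Icc.mp hj
    rcases eq_or_lt_of_le hj1 with h1 | h2
    · have : j - 1 = 0 := by omega
      rw [this, hk0]
      exact (Finset.mem_Icc.mp (hk j hj).1).1
    · by_contra hcon
      push_neg at hcon
      have hj1' : j - 1 ∈ Finset.Icc 1 n' := Finset.mem_Icc.mpr ⟨by omega, by omega⟩
      have hmin := (hk (j - 1) hj1').2.2 (k j) hcon
      have hge := (hk j hj).2.1
      have hlt : (j : ℝ) / n' < ((j - 1 : ℕ) : ℝ) / n' := lt_of_le_of_lt hge hmin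
      have : (j : ℝ) < ((j - 1 : ℕ) : ℝ) := by
        have := (div_lt_div_iff_of_pos_right hn'0).mp hlt
        exact this
      have : j < j - 1 := by exact_mod_cast this
      omega
  have hkn : ∀ j ∈ Finset.Icc 1 n', k (j - 1) ∈ Finset.Icc 1 n := by
    intro j hj
    obtain ⟨hj1, hjn'⟩ := Finset.mem_Icc.mp hj
    rcases eq_or_lt_of_le hj1 with h1 | h2
    · have : j - 1 = 0 := by omega
      rw [this, hk0]; exact Finset.mem_Icc.mpr ⟨le_refl 1, hn⟩
    · exact (hk (j - 1) (Finset.mem_Icc.mpr ⟨by omega, by omega⟩)).1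
  -- the four exceptional sets
  set A : Finset ℕ := (Finset.Icc 1 n').filter (fun j => k j < a) with hA
  set B : Finset ℕ := (Finset.Icc 1 n').filter (fun j => b < k (j - 1)) with hB
  set A' : Finset ℕ := (Finset.Icc 1 n').filter (fun j => k (j - 1) < a) with hA'
  set B' : Finset ℕ := (Finset.Icc 1 n').filter (fun j => b < k j) with hB'
  -- bound on A
  have hcardA : (A.card : ℝ) ≤ α * n' := by
    apply card_le_of_le_real n' A (α * n') (by positivity) (Finset.filter_subset _ _)
    intro j hj
    obtain ⟨hjI, hja⟩ := Finset.mem_filter.mp hj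
    have hge := (hk j hjI).2.1
    have hkjn : k j ≤ n := (Finset.mem_Icc.mp (hk j hjI).1).2
    have hle : S (k j) ≤ α := Smono (k j) (a - 1) (by omega) (by omega)
    have : (j : ℝ) / n' ≤ α := le_trans hge hle
    calc (j : ℝ) = (j : ℝ) / n' * n' := by field_simp
      _ ≤ α * n' := by apply mul_le_mul_of_nonneg_right this (le_of_lt hn'0)
  -- bound on A'
  have hcardA' : (A'.card : ℝ) ≤ α * n' + 1 := by
    apply card_le_of_le_real n' A' (α * n' + 1) (by positivity) (Finset.filter_subset _ _)
    intro j hj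
    obtain ⟨hjI, hja⟩ := Finset.mem_filter.mp hj
    obtain ⟨hj1, hjn'⟩ := Finset.mem_Icc.mp hjI
    rcases eq_or_lt_of_le hj1 with h1 | h2
    · have : (j : ℝ) = 1 := by exact_mod_cast h1.symm
      nlinarith
    · have hj1' : j - 1 ∈ Finset.Icc 1 n' := Finset.mem_Icc.mpr ⟨by omega, by omega⟩
      have hge := (hk (j - 1) hj1').2.2
      have hge2 := (hk (j - 1) hj1').2.1
      have hkjn : k (j - 1) ≤ n := (Finset.mem_Icc.mp (hk (j - 1) hj1').1).2
      have hle : S (k (j - 1)) ≤ α := Smono (k (j - 1)) (a - 1) (by omega) (by omega)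
      have h5 : ((j - 1 : ℕ) : ℝ) / n' ≤ α := le_trans hge2 hle
      have h6 : ((j - 1 : ℕ) : ℝ) ≤ α * n' := by
        calc ((j - 1 : ℕ) : ℝ) = ((j - 1 : ℕ) : ℝ) / n' * n' := by field_simp
          _ ≤ α * n' := mul_le_mul_of_nonneg_right h5 (le_of_lt hn'0)
      have h7 : ((j - 1 : ℕ) : ℝ) = (j : ℝ) - 1 := by
        have : ((j - 1 : ℕ) : ℝ) = ((j : ℕ) : ℝ) - ((1 : ℕ) : ℝ) := by
          rw [← Nat.cast_sub (by omega)]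
        simpa using this
      linarith
  -- bound on B
  have hcardB : (B.card : ℝ) ≤ (n' : ℝ) - β * n' + 1 := by
    apply card_le_of_gt_real n' B (β * n') (by positivity) (by nlinarith) (Finset.filter_subset _ _)
    intro j hj
    obtain ⟨hjI, hjb⟩ := Finset.mem_filter.mp hj
    obtain ⟨hj1, hjn'⟩ := Finset.mem_Icc.mp hjI
    have h2 : 2 ≤ j := by
      by_contra hcon
      have : j = 1 := by omega
      rw [this] at hjb
      simp only [Nat.sub_self] at hjb
      rw [hk0] at hjb; omega
    have hj1' : j - 1 ∈ Finset.Icc 1 n' := Finset.mem_Icc.mpr ⟨by omega, by omega⟩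
    have hmin := (hk (j - 1) hj1').2.2 b hjb
    have h5 : β < ((j - 1 : ℕ) : ℝ) / n' := hmin
    have h6 : β * n' < ((j - 1 : ℕ) : ℝ) := by
      have := (lt_div_iff₀ hn'0).mp h5
      linarith
    have h7 : ((j - 1 : ℕ) : ℝ) ≤ (j : ℝ) := by
      exact_mod_cast Nat.sub_le j 1
    linarith
  -- bound on B'
  have hcardB' : (B'.card : ℝ) ≤ (n' : ℝ) - β * n' + 1 := by
    apply card_le_of_gt_real n' B' (β * n') (by positivity) (by nlinarith) (Finset.filter_subset _ _)
    intro j hj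
    obtain ⟨hjI, hjb⟩ := Finset.mem_filter.mp hj
    have hmin := (hk j hjI).2.2 b hjb
    have h6 : β * n' < (j : ℝ) := by
      have := (lt_div_iff₀ hn'0).mp hmin
      linarith
    exact h6
  constructor
  · -- claim 1
    have hsub : (Finset.Icc 1 n').filter
        (fun j => Disjoint (Finset.Icc (k (j - 1)) (k j)) (Finset.Icc a b)) ⊆ A ∪ B := by
      intro j hj
      obtain ⟨hjI, hdisj⟩ := Finset.mem_filter.mp hj
      rw [Finset.mem_union, hA, hB]
      rcases lt_or_ge (k j) a with hka' | hka
      · exact Or.inl (Finset.mem_filter.mpr ⟨hjI, hka'⟩)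
      rcases lt_or_ge b (k (j - 1)) with hkb' | hkb
      · exact Or.inr (Finset.mem_filter.mpr ⟨hjI, hkb'⟩)
      exfalso
      have hm1 : max a (k (j - 1)) ∈ Finset.Icc (k (j - 1)) (k j) :=
        Finset.mem_Icc.mpr ⟨le_max_right _ _, max_le hka (hkm j hjI)⟩
      have hm2 : max a (k (j - 1)) ∈ Finset.Icc a b :=
        Finset.mem_Icc.mpr ⟨le_max_left _ _, max_le hab hkb⟩
      exact Finset.disjoint_left.mp hdisj hm1 hm2
    have h1 := Finset.card_le_card hsub
    have h2 := Finset.card_union_le A B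
    have h3 : ((Finset.Icc 1 n').filter
        (fun j => Disjoint (Finset.Icc (k (j - 1)) (k j)) (Finset.Icc a b))).card
        ≤ A.card + B.card := le_trans h1 h2
    have h4 : (((Finset.Icc 1 n').filter
        (fun j => Disjoint (Finset.Icc (k (j - 1)) (k j)) (Finset.Icc a b))).card : ℝ)
        ≤ (A.card : ℝ) + B.card := by exact_mod_cast h3
    have hmul : (1 - δ + α) * n' ≤ β * n' :=
      mul_le_mul_of_nonneg_right hβlb (le_of_lt hn'0)
    nlinarith [hcardA, hcardB]
  · -- claim 2
    set G : Finset ℕ := (Finset.Icc 1 n').filter (fun j => a ≤ k (j - 1) ∧ k j ≤ b) with hG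
    have hcover : Finset.Icc 1 n' ⊆ G ∪ (A' ∪ B') := by
      intro j hj
      rw [Finset.mem_union, Finset.mem_union, hG, hA', hB']
      by_cases h1 : k (j - 1) < a
      · exact Or.inr (Or.inl (Finset.mem_filter.mpr ⟨hj, h1⟩))
      · by_cases h2 : b < k j
        · exact Or.inr (Or.inr (Finset.mem_filter.mpr ⟨hj, h2⟩))
        · exact Or.inl (Finset.mem_filter.mpr ⟨hj, le_of_not_gt h1, le_of_not_gt h2⟩)
    have hcard1 : n' ≤ G.card + (A'.card + B'.card) := by
      have := Finset.card_le_card hcover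
      rw [Nat.card_Icc] at this
      have h2 := Finset.card_union_le G (A' ∪ B')
      have h3 := Finset.card_union_le A' B'
      omega
    have hGsub : G ⊆ (Finset.Icc 1 n').filter (fun j => x a ≤ xt j ∧ xt j ≤ x b) := by
      intro j hj
      obtain ⟨hjI, hja, hjb⟩ := Finset.mem_filter.mp hj
      have hkjm := hkn j hjI
      have hkjM := (hk j hjI).1
      obtain ⟨hm1, hm2⟩ := Finset.mem_Icc.mp hkjm
      obtain ⟨hM1, hM2⟩ := Finset.mem_Icc.mp hkjM
      have hx1 : x a ≤ x (k (j - 1)) :=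
        hx ⟨ha1, han⟩ ⟨hm1, hm2⟩ hja
      have hx2 : x (k j) ≤ x b :=
        hx ⟨hM1, hM2⟩ ⟨hb1, hbn⟩ hjb
      obtain ⟨ht1, ht2⟩ := hxt j hjI
      exact Finset.mem_filter.mpr ⟨hjI, le_trans hx1 ht1, le_trans ht2 hx2⟩
    have hcard2 := Finset.card_le_card hGsub
    set F : ℝ := (((Finset.Icc 1 n').filter (fun j => x a ≤ xt j ∧ xt j ≤ x b)).card : ℝ) with hF
    have hfinal : (n' : ℝ) ≤ (((Finset.Icc 1 n').filter
        (fun j => x a ≤ xt j ∧ xt j ≤ x b)).card : ℝ) + ((A'.card : ℝ) + B'.card) := by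
      have h5 : (n' : ℝ) ≤ (G.card : ℝ) + ((A'.card : ℝ) + B'.card) := by exact_mod_cast hcard1
      have h6 : (G.card : ℝ) ≤ (((Finset.Icc 1 n').filter
        (fun j => x a ≤ xt j ∧ xt j ≤ x b)).card : ℝ) := by exact_mod_cast hcard2
      linarith
    have hmul : (1 - δ + α) * n' ≤ β * n' :=
      mul_le_mul_of_nonneg_right hβlb (le_of_lt hn'0)
    linarith [hcardA', hcardB', hfinal, hmul]
end
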